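/- The abelianisation of the (r,s,t) triangle group ⟨x,y,z | xyz = x^r = y^s = z^t = 1⟩ is isomorphic to C_d × C_e, where d = gcd(r,s,t) and e = lcm(gcd(r,s), gcd(r,t), gcd(s,t)). -/

import Mathlib

/-- The defining relators of the (r,s,t) triangle group
`⟨x, y, z ∣ xyz = xʳ = yˢ = zᵗ = 1⟩`. -/
def triangleRels (r s t : ℕ) : Set (FreeGroup (Fin 3)) :=
  {FreeGroup.of 0 * FreeGroup.of 1 * FreeGroup.of 2,
   FreeGroup.of 0 ^ r, FreeGroup.of 1 ^ s, FreeGroup.of 2 ^ t}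

private lemma tri_gcd_aux (r s t : ℕ) :
    Nat.gcd (Nat.gcd r s) t = Nat.gcd (Nat.gcd r t) (Nat.gcd s (Nat.lcm r t)) := by
  apply Nat.dvd_antisymm
  · refine Nat.dvd_gcd (Nat.dvd_gcd ?_ ?_) (Nat.dvd_gcd ?_ ?_)
    · exact dvd_trans (Nat.gcd_dvd_left _ _) (Nat.gcd_dvd_left _ _)
    · exact Nat.gcd_dvd_right _ _
    · exact dvd_trans (Nat.gcd_dvd_left _ _) (Nat.gcd_dvd_right _ _)
    · exact dvd_trans (dvd_trans (Nat.gcd_dvd_left _ _) (Nat.gcd_dvd_left _ _))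
        (Nat.dvd_lcm_left _ _)
  · refine Nat.dvd_gcd (Nat.dvd_gcd ?_ ?_) ?_
    · exact dvd_trans (Nat.gcd_dvd_left _ _) (Nat.gcd_dvd_left _ _)
    · exact dvd_trans (Nat.gcd_dvd_right _ _) (Nat.gcd_dvd_left _ _)
    · exact dvd_trans (Nat.gcd_dvd_left _ _) (Nat.gcd_dvd_right _ _)

private lemma tri_lcm_aux (r s t : ℕ) (hr : r ≠ 0) (hs : s ≠ 0) (ht : t ≠ 0) :
    Nat.lcm (Nat.lcm (Nat.gcd r s) (Nat.gcd r t)) (Nat.gcd s t)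
      = Nat.lcm (Nat.gcd r t) (Nat.gcd s (Nat.lcm r t)) := by
  have hrs : Nat.gcd r s ≠ 0 := Nat.gcd_ne_zero_left hr
  have hrt : Nat.gcd r t ≠ 0 := Nat.gcd_ne_zero_left hr
  have hst : Nat.gcd s t ≠ 0 := Nat.gcd_ne_zero_left hs
  have hL : Nat.lcm r t ≠ 0 := Nat.lcm_ne_zero hr ht
  have hsL : Nat.gcd s (Nat.lcm r t) ≠ 0 := Nat.gcd_ne_zero_left hs
  have h1 : Nat.lcm (Nat.gcd r s) (Nat.gcd r t) ≠ 0 := Nat.lcm_ne_zero hrs hrt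
  apply Nat.factorization_inj (Nat.lcm_ne_zero h1 hst) (Nat.lcm_ne_zero hrt hsL)
  rw [Nat.factorization_lcm h1 hst, Nat.factorization_lcm hrs hrt,
    Nat.factorization_lcm hrt hsL, Nat.factorization_gcd hr hs, Nat.factorization_gcd hr ht,
    Nat.factorization_gcd hs ht, Nat.factorization_gcd hs hL, Nat.factorization_lcm hr ht]
  ext p
  simp only [Finsupp.inf_apply, Finsupp.sup_apply]
  omega

private theorem tri_key {A : Type} [AddCommGroup A] (r s t : ℕ)
    (hr : 0 < r) (hs : 0 < s) (ht : 0 < t)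
    (X Y Z : A) (hXYZ : X + Y + Z = 0)
    (hX : (r : ℤ) • X = 0) (hY : (s : ℤ) • Y = 0) (hZ : (t : ℤ) • Z = 0)
    (hgen : ∀ f g : A →+ A, f X = g X → f Y = g Y → f Z = g Z → f = g)
    (hlift : ∀ (B : Type) [AddCommGroup B] (x y z : B), x + y + z = 0 →
      (r : ℤ) • x = 0 → (s : ℤ) • y = 0 → (t : ℤ) • z = 0 →
      ∃ f : A →+ B, f X = x ∧ f Y = y ∧ f Z = z) :
    Nonempty (A ≃+ (ZMod (Nat.gcd (Nat.gcd r t) (Nat.gcd s (Nat.lcm r t)))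
      × ZMod (Nat.lcm (Nat.gcd r t) (Nat.gcd s (Nat.lcm r t))))) := by
  set g : ℕ := Nat.gcd r t with hgdef
  set L : ℕ := Nat.lcm r t with hLdef
  set n : ℕ := Nat.gcd s L with hndef
  set d : ℕ := Nat.gcd g n with hddef
  set e : ℕ := Nat.lcm g n with hedef
  have hg0 : g ≠ 0 := Nat.gcd_ne_zero_left hr.ne'
  have hL0 : L ≠ 0 := Nat.lcm_ne_zero hr.ne' ht.ne'
  have hn0 : n ≠ 0 := Nat.gcd_ne_zero_left hs.ne'
  have hd0 : d ≠ 0 := Nat.gcd_ne_zero_left hg0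
  have hdz : (d : ℤ) ≠ 0 := Int.natCast_ne_zero.mpr hd0
  have hgz : (g : ℤ) ≠ 0 := Int.natCast_ne_zero.mpr hg0
  -- Bezout coefficients
  obtain ⟨α, β, hαβ⟩ : ∃ a b : ℤ, (g : ℤ) = r * a + t * b := ⟨_, _, Nat.gcd_eq_gcd_ab r t⟩
  obtain ⟨σ, τ, hστ⟩ : ∃ a b : ℤ, (n : ℤ) = s * a + L * b := ⟨_, _, Nat.gcd_eq_gcd_ab s L⟩
  obtain ⟨lam, mu, hlm⟩ : ∃ a b : ℤ, (d : ℤ) = g * a + n * b := ⟨_, _, Nat.gcd_eq_gcd_ab g n⟩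
  -- divisibility witnesses
  obtain ⟨tg, htg⟩ : ∃ c : ℤ, (t : ℤ) = g * c :=
    Int.natCast_dvd_natCast.mpr (Nat.gcd_dvd_right r t)
  obtain ⟨rg, hrg⟩ : ∃ c : ℤ, (r : ℤ) = g * c :=
    Int.natCast_dvd_natCast.mpr (Nat.gcd_dvd_left r t)
  obtain ⟨sn, hsn⟩ : ∃ c : ℤ, (s : ℤ) = n * c :=
    Int.natCast_dvd_natCast.mpr (Nat.gcd_dvd_left s L)
  obtain ⟨Ln, hLn⟩ : ∃ c : ℤ, (L : ℤ) = n * c :=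
    Int.natCast_dvd_natCast.mpr (Nat.gcd_dvd_right s L)
  obtain ⟨gd, hgd⟩ : ∃ c : ℤ, (g : ℤ) = d * c :=
    Int.natCast_dvd_natCast.mpr (Nat.gcd_dvd_left g n)
  obtain ⟨nd, hnd⟩ : ∃ c : ℤ, (n : ℤ) = d * c :=
    Int.natCast_dvd_natCast.mpr (Nat.gcd_dvd_right g n)
  have hgL : (g : ℤ) * L = r * t := by exact_mod_cast Nat.gcd_mul_lcm r t
  have hde : (d : ℤ) * e = g * n := by exact_mod_cast Nat.gcd_mul_lcm g n
  have hLrg : (L : ℤ) = rg * t := by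
    apply mul_left_cancel₀ hgz
    linear_combination hgL + t * hrg
  have hLtg : (L : ℤ) = r * tg := by
    apply mul_left_cancel₀ hgz
    linear_combination hgL + r * htg
  have heg : (e : ℤ) = g * nd := by
    apply mul_left_cancel₀ hdz
    linear_combination hde + g * hnd
  have hen : (e : ℤ) = n * gd := by
    apply mul_left_cancel₀ hdz
    linear_combination hde + n * hgd - hde + hde
  -- key scalars
  set b1 : ℤ := β * tg with hb1
  set k : ℤ := mu * nd with hk
  have hgb1 : (g : ℤ) * b1 = β * t := by rw [hb1, htg]; ring
  have hdk : (d : ℤ) * k = mu * n := by rw [hk, hnd]; ring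
  have hdk1 : (d : ℤ) * (1 - k) = lam * g := by linear_combination hlm - hdk
  -- relations in A
  have hZeq : Z = -(X + Y) := by
    have := hXYZ
    rw [← neg_eq_iff_add_eq_zero] at this
    · linear_combination (norm := module) - this
  have h3 : (t : ℤ) • X + (t : ℤ) • Y = 0 := by
    have h := hZ
    rw [hZeq] at h
    have h2 : (t : ℤ) • X + (t : ℤ) • Y = -((t : ℤ) • (-(X + Y))) := by module
    rw [h2, h, neg_zero]
  have hgP : (g : ℤ) • (X + b1 • Y) = 0 := by
    have step : (g : ℤ) • (X + b1 • Y)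
        = α • ((r : ℤ) • X) + β • ((t : ℤ) • X + (t : ℤ) • Y) := by
      match_scalars
      · linear_combination hαβ
      · linear_combination hgb1
    rw [step, hX, h3, smul_zero, smul_zero, add_zero]
  have hLY : (L : ℤ) • Y = 0 := by
    have step : (L : ℤ) • Y = rg • ((t : ℤ) • X + (t : ℤ) • Y) - tg • ((r : ℤ) • X) := by
      match_scalars
      · linear_combination hLrg
      · linear_combination tg * hrg - rg * htg
    rw [step, hX, h3, smul_zero, smul_zero, sub_zero]
  have hnY : (n : ℤ) • Y = 0 := by
    have step : (n : ℤ) • Y = σ • ((s : ℤ) • Y) + τ • ((L : ℤ) • Y) := by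
      match_scalars
      · linear_combination hστ
    rw [step, hY, hLY, smul_zero, smul_zero, add_zero]
  -- new basis elements
  set P' : A := (1 - k) • X + ((1 - k) * b1 + k) • Y with hP'
  set Q' : A := -X + (1 - b1) • Y with hQ'
  have hdP' : (d : ℤ) • P' = 0 := by
    have step : (d : ℤ) • P' = lam • ((g : ℤ) • (X + b1 • Y)) + mu • ((n : ℤ) • Y) := by
      rw [hP']
      match_scalars
      · linear_combination hdk1
      · linear_combination b1 * hdk1 + hdk
    rw [step, hgP, hnY, smul_zero, smul_zero, add_zero]
  have heQ' : (e : ℤ) • Q' = 0 := by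
    have step : (e : ℤ) • Q' = gd • ((n : ℤ) • Y) - nd • ((g : ℤ) • (X + b1 • Y)) := by
      rw [hQ']
      match_scalars
      · linear_combination -heg
      · linear_combination hen - b1 * heg
    rw [step, hgP, hnY, smul_zero, smul_zero, sub_zero]
  -- the backward homomorphism
  set ψ : (ZMod d × ZMod e) →+ A :=
    AddMonoidHom.coprod
      (ZMod.lift d ⟨zmultiplesHom A P', by simpa using hdP'⟩)
      (ZMod.lift e ⟨zmultiplesHom A Q', by simpa using heQ'⟩) with hψdef
  have hψ : ∀ m m' : ℤ, ψ (((m : ℤ) : ZMod d), ((m' : ℤ) : ZMod e)) = m • P' + m' • Q' := by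
    intro m m'
    rw [hψdef]
    simp [AddMonoidHom.coprod_apply, ZMod.lift_coe]
  -- the images of the generators
  set u : ZMod d × ZMod e := (((1 - b1 : ℤ) : ZMod d), ((-k - b1 * (1 - k) : ℤ) : ZMod e))
    with hu
  set v : ZMod d × ZMod e := (((1 : ℤ) : ZMod d), ((1 - k : ℤ) : ZMod e)) with hv
  -- divisibility facts for well-definedness
  have D1 : (d : ℤ) ∣ r * (1 - b1) := by
    refine ⟨gd * rg * (1 - b1), ?_⟩
    linear_combination (1 - b1) * hrg + (1 - b1) * rg * hgd
  have D2 : (e : ℤ) ∣ r * (-k - b1 * (1 - k)) := by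
    refine ⟨-(mu * rg + lam * β * Ln), ?_⟩
    apply mul_left_cancel₀ hdz
    calc (d : ℤ) * (r * (-k - b1 * (1 - k)))
        = r * (-(mu * n) - b1 * (lam * g)) := by
          linear_combination (-r) * hdk - (r * b1) * hdk1
      _ = -(mu * n * r) - lam * (β * t) * r := by linear_combination (-lam * r) * hgb1
      _ = -(mu * n * (g * rg)) - lam * β * ((g : ℤ) * L) := by
          linear_combination (-mu * n) * hrg + lam * β * hgL
      _ = -((g : ℤ) * n * (mu * rg + lam * β * Ln)) := by linear_combination (-lam * β * g) * hLn
      _ = (d : ℤ) * (e * -(mu * rg + lam * β * Ln)) := by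
          linear_combination (mu * rg + lam * β * Ln) * hde
  have D3 : (d : ℤ) ∣ s * 1 := by
    refine ⟨nd * sn, ?_⟩
    linear_combination hsn + sn * hnd
  have D4 : (e : ℤ) ∣ s * (1 - k) := by
    refine ⟨lam * sn, ?_⟩
    apply mul_left_cancel₀ hdz
    calc (d : ℤ) * (s * (1 - k)) = s * (lam * g) := by linear_combination s * hdk1
      _ = lam * ((n : ℤ) * sn) * g := by linear_combination lam * g * hsn
      _ = (d : ℤ) * (e * (lam * sn)) := by linear_combination (-(lam * sn)) * hde
  have D5 : (d : ℤ) ∣ t * ((1 - b1) + 1) := by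
    refine ⟨gd * tg * (2 - b1), ?_⟩
    linear_combination (2 - b1) * htg + (2 - b1) * tg * hgd
  have D6 : (e : ℤ) ∣ t * ((-k - b1 * (1 - k)) + (1 - k)) := by
    refine ⟨lam * α * Ln - mu * tg, ?_⟩
    apply mul_left_cancel₀ hdz
    calc (d : ℤ) * (t * ((-k - b1 * (1 - k)) + (1 - k)))
        = t * (lam * g - mu * n - b1 * (lam * g)) := by
          linear_combination (-t) * hdk + (t - t * b1) * hdk1
      _ = t * (lam * (r * α) - mu * n) := by
          linear_combination t * lam * hαβ - t * lam * hgb1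
      _ = lam * α * ((g : ℤ) * L) - mu * (g * tg) * n := by
          linear_combination (-(lam * α)) * hgL - mu * n * htg
      _ = (g : ℤ) * n * (lam * α * Ln - mu * tg) := by linear_combination lam * α * g * hLn
      _ = (d : ℤ) * (e * (lam * α * Ln - mu * tg)) := by
          linear_combination (-(lam * α * Ln - mu * tg)) * hde
  -- the forward homomorphism
  obtain ⟨φ, hφX, hφY, hφZ⟩ := hlift (ZMod d × ZMod e) u v (-(u + v))
    (by abel)
    (by
      rw [hu, Prod.smul_mk, Prod.mk_eq_zero]
      constructor
      · rw [zsmul_eq_mul, ← Int.cast_natCast, ← Int.cast_mul,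
          ZMod.intCast_zmod_eq_zero_iff_dvd]
        exact D1
      · rw [zsmul_eq_mul, ← Int.cast_natCast, ← Int.cast_mul,
          ZMod.intCast_zmod_eq_zero_iff_dvd]
        exact D2)
    (by
      rw [hv, Prod.smul_mk, Prod.mk_eq_zero]
      constructor
      · rw [zsmul_eq_mul, ← Int.cast_natCast, ← Int.cast_mul,
          ZMod.intCast_zmod_eq_zero_iff_dvd]
        simpa using D3
      · rw [zsmul_eq_mul, ← Int.cast_natCast, ← Int.cast_mul,
          ZMod.intCast_zmod_eq_zero_iff_dvd]
        exact D4)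
    (by
      rw [smul_neg, neg_eq_zero, hu, hv, Prod.mk_add_mk, ← Int.cast_add, ← Int.cast_add,
        Prod.smul_mk, Prod.mk_eq_zero]
      constructor
      · rw [zsmul_eq_mul, ← Int.cast_natCast, ← Int.cast_mul,
          ZMod.intCast_zmod_eq_zero_iff_dvd]
        exact D5
      · rw [zsmul_eq_mul, ← Int.cast_natCast, ← Int.cast_mul,
          ZMod.intCast_zmod_eq_zero_iff_dvd]
        exact D6)
  -- the compositions
  have hψu : ψ u = X := by
    rw [hu, hψ, hP', hQ']
    module
  have hψv : ψ v = Y := by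
    rw [hv, hψ, hP', hQ']
    module
  have comp1 : ψ.comp φ = AddMonoidHom.id A := by
    apply hgen
    · rw [AddMonoidHom.comp_apply, hφX, AddMonoidHom.id_apply]
      exact hψu
    · rw [AddMonoidHom.comp_apply, hφY, AddMonoidHom.id_apply]
      exact hψv
    · rw [AddMonoidHom.comp_apply, hφZ, AddMonoidHom.id_apply, map_neg, map_add,
        hψu, hψv, hZeq]
  have hφP' : φ P' = (((1 : ℤ) : ZMod d), ((0 : ℤ) : ZMod e)) := by
    rw [hP', map_add, map_zsmul, map_zsmul, hφX, hφY, hu, hv]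
    rw [Prod.smul_mk, Prod.smul_mk, Prod.mk_add_mk, Prod.mk.injEq]
    constructor
    · rw [zsmul_eq_mul, zsmul_eq_mul]
      push_cast
      ring
    · rw [zsmul_eq_mul, zsmul_eq_mul]
      push_cast
      ring
  have hφQ' : φ Q' = (((0 : ℤ) : ZMod d), ((1 : ℤ) : ZMod e)) := by
    rw [hQ', map_add, map_neg, map_zsmul, hφX, hφY, hu, hv]
    rw [Prod.smul_mk, Prod.neg_mk, Prod.mk_add_mk, Prod.mk.injEq]
    constructor
    · rw [zsmul_eq_mul]
      push_cast
      ring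
    · rw [zsmul_eq_mul]
      push_cast
      ring
  have comp2 : φ.comp ψ = AddMonoidHom.id (ZMod d × ZMod e) := by
    apply AddMonoidHom.ext
    rintro ⟨a, b⟩
    obtain ⟨m, rfl⟩ := ZMod.intCast_surjective a
    obtain ⟨m', rfl⟩ := ZMod.intCast_surjective b
    rw [AddMonoidHom.comp_apply, AddMonoidHom.id_apply, hψ, map_add, map_zsmul, map_zsmul,
      hφP', hφQ', Prod.smul_mk, Prod.smul_mk, Prod.mk_add_mk, Prod.mk.injEq]
    constructor
    · rw [zsmul_eq_mul, zsmul_eq_mul]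
      push_cast
      ring
    · rw [zsmul_eq_mul, zsmul_eq_mul]
      push_cast
      ring
  exact ⟨AddMonoidHom.toAddEquiv φ ψ comp1 comp2⟩

theorem triangle_group_abelianization (r s t : ℕ)
    (hr : 0 < r) (hs : 0 < s) (ht : 0 < t) :
    Nonempty (Abelianization (PresentedGroup (triangleRels r s t)) ≃*
      Multiplicative (ZMod (Nat.gcd (Nat.gcd r s) t) ×
        ZMod (Nat.lcm (Nat.lcm (Nat.gcd r s) (Nat.gcd r t)) (Nat.gcd s t)))) := by
  rw [tri_gcd_aux r s t, tri_lcm_aux r s t hr.ne' hs.ne' ht.ne']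
  set G := PresentedGroup (triangleRels r s t) with hG
  -- the relators are killed in G
  have hmk : ∀ w ∈ triangleRels r s t, PresentedGroup.mk (triangleRels r s t) w = 1 := by
    intro w hw
    exact (QuotientGroup.eq_one_iff _).mpr (Subgroup.subset_normalClosure hw)
  have hofmk : ∀ i : Fin 3, (PresentedGroup.of i : G) = PresentedGroup.mk _ (FreeGroup.of i) :=
    fun _ => rfl
  have h1 : (PresentedGroup.of 0 * PresentedGroup.of 1 * PresentedGroup.of 2 : G) = 1 := by
    rw [hofmk, hofmk, hofmk, ← map_mul, ← map_mul]
    exact hmk _ (by simp [triangleRels])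
  have h2 : (PresentedGroup.of 0 : G) ^ r = 1 := by
    rw [hofmk, ← map_pow]
    exact hmk _ (by simp [triangleRels])
  have h3 : (PresentedGroup.of 1 : G) ^ s = 1 := by
    rw [hofmk, ← map_pow]
    exact hmk _ (by simp [triangleRels])
  have h4 : (PresentedGroup.of 2 : G) ^ t = 1 := by
    rw [hofmk, ← map_pow]
    exact hmk _ (by simp [triangleRels])
  set A : Type := Additive (Abelianization G) with hA
  set X : A := Additive.ofMul (Abelianization.of (PresentedGroup.of 0)) with hX
  set Y : A := Additive.ofMul (Abelianization.of (PresentedGroup.of 1)) with hY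
  set Z : A := Additive.ofMul (Abelianization.of (PresentedGroup.of 2)) with hZ
  have hXYZ : X + Y + Z = 0 := by
    rw [hX, hY, hZ, ← ofMul_mul, ← ofMul_mul, ← map_mul, ← map_mul, h1, map_one, ofMul_one]
  have hXr : (r : ℤ) • X = 0 := by
    rw [natCast_zsmul, hX, ← ofMul_pow, ← map_pow, h2, map_one, ofMul_one]
  have hYs : (s : ℤ) • Y = 0 := by
    rw [natCast_zsmul, hY, ← ofMul_pow, ← map_pow, h3, map_one, ofMul_one]
  have hZt : (t : ℤ) • Z = 0 := by
    rw [natCast_zsmul, hZ, ← ofMul_pow, ← map_pow, h4, map_one, ofMul_one]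
  have hgen : ∀ f g : A →+ A, f X = g X → f Y = g Y → f Z = g Z → f = g := by
    intro f g hfX hfY hfZ
    have key : MonoidHom.toAdditive.symm f = MonoidHom.toAdditive.symm g := by
      apply Abelianization.hom_ext
      apply PresentedGroup.ext
      intro x
      fin_cases x
      · exact hfX
      · exact hfY
      · exact hfZ
    exact MonoidHom.toAdditive.symm.injective key
  have hlift : ∀ (B : Type) [AddCommGroup B] (x y z : B), x + y + z = 0 →
      (r : ℤ) • x = 0 → (s : ℤ) • y = 0 → (t : ℤ) • z = 0 →
      ∃ f : A →+ B, f X = x ∧ f Y = y ∧ f Z = z := by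
    intro B _ x y z h0 hx hy hz
    set f : Fin 3 → Multiplicative B :=
      ![Multiplicative.ofAdd x, Multiplicative.ofAdd y, Multiplicative.ofAdd z] with hf
    have hrels : ∀ w ∈ triangleRels r s t, FreeGroup.lift f w = 1 := by
      intro w hw
      rcases hw with rfl | rfl | rfl | rfl
      · rw [map_mul, map_mul, FreeGroup.lift_apply_of, FreeGroup.lift_apply_of, FreeGroup.lift_apply_of]
        show Multiplicative.ofAdd x * Multiplicative.ofAdd y * Multiplicative.ofAdd z = 1
        rw [← ofAdd_add, ← ofAdd_add, h0, ofAdd_zero]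
      · rw [map_pow, FreeGroup.lift_apply_of]
        show (Multiplicative.ofAdd x) ^ r = 1
        rw [← ofAdd_nsmul, ← natCast_zsmul, hx, ofAdd_zero]
      · rw [map_pow, FreeGroup.lift_apply_of]
        show (Multiplicative.ofAdd y) ^ s = 1
        rw [← ofAdd_nsmul, ← natCast_zsmul, hy, ofAdd_zero]
      · rw [map_pow, FreeGroup.lift_apply_of]
        show (Multiplicative.ofAdd z) ^ t = 1
        rw [← ofAdd_nsmul, ← natCast_zsmul, hz, ofAdd_zero]
    set F : Abelianization G →* Multiplicative B :=
      Abelianization.lift (PresentedGroup.toGroup hrels) with hF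
    refine ⟨MonoidHom.toAdditiveLeft F, ?_, ?_, ?_⟩
    · show Multiplicative.toAdd (F (Abelianization.of (PresentedGroup.of 0))) = x
      rw [hF, Abelianization.lift_apply_of, PresentedGroup.toGroup.of]
      rfl
    · show Multiplicative.toAdd (F (Abelianization.of (PresentedGroup.of 1))) = y
      rw [hF, Abelianization.lift_apply_of, PresentedGroup.toGroup.of]
      rfl
    · show Multiplicative.toAdd (F (Abelianization.of (PresentedGroup.of 2))) = z
      rw [hF, Abelianization.lift_apply_of, PresentedGroup.toGroup.of]
      rfl
  obtain ⟨eqv⟩ := tri_key r s t hr hs ht X Y Z hXYZ hXr hYs hZt hgen hlift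
  exact ⟨AddEquiv.toMultiplicativeRight eqv⟩
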